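/- Let Λ be a full lattice in M₂(ℝ) and let τ = x + iy be a complex number with y > 0. Then the image L_τ = {β·(τ,1)ᵗ : β ∈ Λ} is a full lattice in ℂ², and its covolume with respect to Lebesgue measure on ℂ² ≅ ℝ⁴ satisfies vol(ℂ²/L_τ) = y² · vol(M₂(ℝ)/Λ). -/

import Mathlib

open MeasureTheory

noncomputable instance : MeasureSpace (Matrix (Fin 2) (Fin 2) ℝ) :=
  inferInstanceAs (MeasureSpace (Fin 2 → Fin 2 → ℝ))

noncomputable instance : NormedAddCommGroup (Matrix (Fin 2) (Fin 2) ℝ) :=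
  inferInstanceAs (NormedAddCommGroup (Fin 2 → Fin 2 → ℝ))

noncomputable instance : NormedSpace ℝ (Matrix (Fin 2) (Fin 2) ℝ) :=
  inferInstanceAs (NormedSpace ℝ (Fin 2 → Fin 2 → ℝ))

noncomputable section AuxiliaryDefs

open Complex

/-- The real-linear map `z ↦ z.re • τ + z.im` on `ℂ`. -/
def gmap (τ : ℂ) : ℂ →ₗ[ℝ] ℂ where
  toFun z := z.re * τ + z.im
  map_add' z w := by simp [add_mul]; ring
  map_smul' r z := by simp [Complex.smul_re, Complex.smul_im]; ring

theorem gmap_injective (τ : ℂ) (hτ : 0 < τ.im) : Function.Injective (gmap τ) := by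
  intro z w h
  simp only [gmap, LinearMap.coe_mk, AddHom.coe_mk] at h
  have h1 := congrArg Complex.im h
  have h2 := congrArg Complex.re h
  simp at h1 h2
  have hz : z.re = w.re := h1.resolve_right hτ.ne'
  apply Complex.ext hz
  rw [hz] at h2; linarith

def gE (τ : ℂ) (hτ : 0 < τ.im) : ℂ ≃ₗ[ℝ] ℂ :=
  LinearEquiv.ofBijective (gmap τ)
    ⟨gmap_injective τ hτ, LinearMap.surjective_of_injective (gmap_injective τ hτ)⟩

theorem det_gmap (τ : ℂ) : LinearMap.det (gmap τ) = -τ.im := by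
  rw [← LinearMap.det_toMatrix Complex.basisOneI]
  have : LinearMap.toMatrix Complex.basisOneI Complex.basisOneI (gmap τ)
      = !![τ.re, 1; τ.im, 0] := by
    ext i j
    rw [LinearMap.toMatrix_apply]
    fin_cases i <;> fin_cases j <;>
      simp [gmap, Complex.coe_basisOneI_repr]
  rw [this, Matrix.det_fin_two_of]
  ring

/-- componentwise version -/
def hE (τ : ℂ) (hτ : 0 < τ.im) : (Fin 2 → ℂ) ≃ₗ[ℝ] (Fin 2 → ℂ) :=
  LinearEquiv.piCongrRight (fun _ => gE τ hτ)

theorem det_hE (τ : ℂ) (hτ : 0 < τ.im) :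
    LinearMap.det ((hE τ hτ : (Fin 2 → ℂ) →ₗ[ℝ] (Fin 2 → ℂ))) = τ.im ^ 2 := by
  classical
  set B := Pi.basis (fun _ : Fin 2 => Complex.basisOneI)
  set eqv : Fin 2 × Fin 2 ≃ (Σ _ : Fin 2, Fin 2) :=
    (Equiv.prodComm (Fin 2) (Fin 2)).trans (Equiv.sigmaEquivProd (Fin 2) (Fin 2)).symm
  rw [← LinearMap.det_toMatrix B]
  have hsub : ((LinearMap.toMatrix B B (hE τ hτ)).submatrix eqv eqv)
      = Matrix.blockDiagonal (fun _ : Fin 2 =>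
          LinearMap.toMatrix Complex.basisOneI Complex.basisOneI (gmap τ)) := by
    ext ⟨a, i⟩ ⟨b, j⟩
    simp only [Matrix.submatrix_apply, LinearMap.toMatrix_apply, Matrix.blockDiagonal_apply,
      eqv, Equiv.trans_apply, Equiv.prodComm_apply, Prod.swap_prod_mk,
      Equiv.sigmaEquivProd_symm_apply]
    rw [Pi.basis_apply]
    have himg : (hE τ hτ) (Pi.single j (Complex.basisOneI b))
        = Pi.single j ((gmap τ) (Complex.basisOneI b)) := by
      ext k
      simp only [hE, LinearEquiv.piCongrRight_apply]
      rcases eq_or_ne k j with rfl | hk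
      · simp [gE]; rfl
      · simp [Pi.single_eq_of_ne hk, gE]
    simp only [LinearEquiv.coe_coe]
    rw [himg, Pi.basis_repr]
    rcases eq_or_ne i j with rfl | hij
    · simp
    · simp [Pi.single_eq_of_ne hij, hij]
  rw [← Matrix.det_submatrix_equiv_self eqv (LinearMap.toMatrix B B (hE τ hτ)), hsub,
    Matrix.det_blockDiagonal]
  simp [LinearMap.det_toMatrix, det_gmap]

/-- Row-wise identification of `M₂(ℝ)` with `ℂ²`. -/
def SE : (Fin 2 → Fin 2 → ℝ) ≃ₗ[ℝ] (Fin 2 → ℂ) :=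
  LinearEquiv.piCongrRight (fun _ => Complex.basisOneI.equivFun.symm)

theorem SE_measurePreserving : MeasurePreserving (⇑SE) volume volume := by
  have h : MeasurePreserving
      (fun (β : Fin 2 → Fin 2 → ℝ) (i : Fin 2) => Complex.measurableEquivPi.symm (β i))
      volume volume :=
    volume_preserving_pi fun _ => Complex.volume_preserving_equiv_pi.symm
  convert h using 2
  exact rfl

theorem SE_symm_measurePreserving : MeasurePreserving (⇑SE.symm) volume volume := by
  have h : MeasurePreserving
      (fun (v : Fin 2 → ℂ) (i : Fin 2) => Complex.measurableEquivPi (v i))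
      volume volume :=
    volume_preserving_pi fun _ => Complex.volume_preserving_equiv_pi
  convert h using 2
  exact rfl

instance : BorelSpace (Matrix (Fin 2) (Fin 2) ℝ) :=
  inferInstanceAs (BorelSpace (Fin 2 → Fin 2 → ℝ))

instance : Measure.IsAddHaarMeasure (volume : Measure (Matrix (Fin 2) (Fin 2) ℝ)) :=
  haveI := isAddHaarMeasure_volume_pi (Fin 2)
  inferInstanceAs (Measure.IsAddHaarMeasure (volume : Measure (Fin 2 → Fin 2 → ℝ)))

def TE (τ : ℂ) (hτ : 0 < τ.im) : Matrix (Fin 2) (Fin 2) ℝ ≃ₗ[ℝ] (Fin 2 → ℂ) :=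
  SE.trans (hE τ hτ)

theorem TE_apply (τ : ℂ) (hτ : 0 < τ.im) (β : Matrix (Fin 2) (Fin 2) ℝ) :
    TE τ hτ β = (β.map Complex.ofReal).mulVec ![τ, 1] := by
  funext i
  show gmap τ (Complex.basisOneI.equivFun.symm (β i)) = _
  rw [Module.Basis.equivFun_symm_apply]
  simp [gmap, Matrix.mulVec, dotProduct, Fin.sum_univ_two, Complex.basisOneI,
    Matrix.map_apply]

/-- Let `Λ` be a full lattice in `M₂(ℝ)` and `τ = x + iy` with `y > 0`. Then
`L_τ = {β·(τ,1)ᵗ : β ∈ Λ}` is a full lattice in `ℂ²`, and its covolume with respect to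
Lebesgue measure on `ℂ² ≅ ℝ⁴` satisfies `vol(ℂ²/L_τ) = y² · vol(M₂(ℝ)/Λ)`. -/
theorem stmt1 (Λ : Submodule ℤ (Matrix (Fin 2) (Fin 2) ℝ))
    [DiscreteTopology Λ] [IsZLattice ℝ Λ] (τ : ℂ) (hτ : 0 < τ.im) :
    ∃ (L : Submodule ℤ (Fin 2 → ℂ)) (_ : DiscreteTopology L) (_ : IsZLattice ℝ L),
      (L : Set (Fin 2 → ℂ))
        = (fun β : Matrix (Fin 2) (Fin 2) ℝ => (β.map (Complex.ofReal)).mulVec ![τ, 1]) '' Λ ∧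
      ZLattice.covolume L = τ.im ^ 2 * ZLattice.covolume Λ := by
  classical
  set T : Matrix (Fin 2) (Fin 2) ℝ ≃ₗ[ℝ] (Fin 2 → ℂ) := TE τ hτ with hTdef
  let Tc : Matrix (Fin 2) (Fin 2) ℝ ≃L[ℝ] (Fin 2 → ℂ) := T.toContinuousLinearEquiv
  refine ⟨ZLattice.comap ℝ Λ Tc.symm.toLinearMap, inferInstance, inferInstance, ?_, ?_⟩
  · rw [ZLattice.coe_comap]
    have h1 : ⇑Tc.symm.toLinearMap ⁻¹' ↑Λ = ⇑T '' ↑Λ := by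
      ext x
      rw [Set.mem_preimage]
      constructor
      · intro hx
        exact ⟨Tc.symm x, hx, by simp [Tc]⟩
      · rintro ⟨y, hy, rfl⟩
        simpa [Tc] using hy
    rw [h1]
    exact congrArg (· '' (Λ : Set (Matrix (Fin 2) (Fin 2) ℝ)))
      (funext fun β => TE_apply τ hτ β)
  · set b := Module.Free.chooseBasis ℤ Λ with hb
    set F₀ := ZSpan.fundamentalDomain (b.ofZLatticeBasis ℝ Λ) with hF₀
    rw [ZLattice.covolume_eq_measure_fundamentalDomain _ volume
        (ZLattice.isAddFundamentalDomain (b.ofZLatticeComap ℝ Λ Tc.symm.toLinearEquiv) volume),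
      ZLattice.covolume_eq_measure_fundamentalDomain Λ volume
        (ZLattice.isAddFundamentalDomain b volume)]
    have key : ZSpan.fundamentalDomain
          (((b.ofZLatticeComap ℝ Λ Tc.symm.toLinearEquiv)).ofZLatticeBasis ℝ _)
        = ⇑T '' F₀ := by
      rw [hF₀, ZSpan.map_fundamentalDomain]
      congr!
      ext
      rw [Module.Basis.ofZLatticeBasis_apply, Module.Basis.ofZLatticeComap_apply]
      simp [Tc, Module.Basis.map_apply, Module.Basis.ofZLatticeBasis_apply]
    rw [key]
    have himg : ⇑T '' F₀ = ⇑((hE τ hτ : (Fin 2 → ℂ) →ₗ[ℝ] (Fin 2 → ℂ))) '' (⇑SE '' F₀) := by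
      exact Set.image_comp (⇑(hE τ hτ : (Fin 2 → ℂ) →ₗ[ℝ] (Fin 2 → ℂ))) (⇑SE) F₀
    have hS : volume (⇑SE '' F₀) = volume F₀ := by
      rw [show ⇑SE '' F₀ = ⇑SE.symm ⁻¹' F₀ from LinearEquiv.image_eq_preimage_symm _ _]
      exact SE_symm_measurePreserving.measure_preimage
        ((ZSpan.fundamentalDomain_measurableSet (b.ofZLatticeBasis ℝ Λ)).nullMeasurableSet)
    have hhE := volume.addHaar_image_linearMap
      ((hE τ hτ : (Fin 2 → ℂ) →ₗ[ℝ] (Fin 2 → ℂ))) (⇑SE '' F₀)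
    rw [himg, measureReal_def, measureReal_def, hhE, hS, det_hE, _root_.abs_of_nonneg (by positivity : (0:ℝ) ≤ τ.im ^ 2),
      ENNReal.toReal_mul, ENNReal.toReal_ofReal (by positivity)]

end AuxiliaryDefs
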